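/- The Altes chirplet has infinite Lipschitz regularity: for every α > 0, the frequency-weighted magnitude integral satisfies ∫_{0}^{∞} |U(ω)|·(1 + ω^α) dω = ω₀·√(π/κ)·exp(1/(4κ))·(1 + ω₀^α·exp((α² + 2α)/(4κ))), which is finite. -/

import Mathlib

open MeasureTheory Real

/-- The reparameterized Altes chirplet frequency response. -/
noncomputable def altes (κ ω₀ lam : ℝ) : ℝ → ℂ := fun ω =>
  if 0 < ω then
    Complex.exp (-(↑(κ * (Real.log (ω / ω₀)) ^ 2) : ℂ)) *
      Complex.exp (2 * Real.pi * Complex.I * Real.log ω / Real.log lam)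
  else 0

lemma gauss_eq (b c d : ℝ) (hb : 0 < b) (x : ℝ) :
    rexp (-b * x ^ 2 + c * x + d) =
      rexp (d + c ^ 2 / (4 * b)) * rexp (-b * (x - c / (2 * b)) ^ 2) := by
  rw [← Real.exp_add]
  congr 1
  field_simp
  ring

lemma gauss_integrable (b c d : ℝ) (hb : 0 < b) :
    Integrable (fun x : ℝ => rexp (-b * x ^ 2 + c * x + d)) := by
  simp_rw [gauss_eq b c d hb]
  exact ((integrable_exp_neg_mul_sq hb).comp_sub_right (c / (2 * b))).const_mul _

lemma gauss_integral (b c d : ℝ) (hb : 0 < b) :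
    ∫ x : ℝ, rexp (-b * x ^ 2 + c * x + d) =
      Real.sqrt (Real.pi / b) * rexp (d + c ^ 2 / (4 * b)) := by
  simp_rw [gauss_eq b c d hb]
  rw [integral_const_mul, integral_sub_right_eq_self (fun x : ℝ => rexp (-b * x ^ 2)),
    integral_gaussian, mul_comm]

lemma altes_norm (κ ω₀ lam : ℝ) (ω : ℝ) (hω : 0 < ω) :
    ‖altes κ ω₀ lam ω‖ = rexp (-(κ * (Real.log (ω / ω₀)) ^ 2)) := by
  have h2 : (2 * Real.pi * Complex.I * (Real.log ω : ℂ) / (Real.log lam : ℂ)) =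
      ((2 * Real.pi * Real.log ω / Real.log lam : ℝ) : ℂ) * Complex.I := by
    push_cast
    ring
  rw [altes, if_pos hω, norm_mul, h2, Complex.norm_exp_ofReal_mul_I, mul_one,
    Complex.norm_exp, Complex.neg_re, Complex.ofReal_re]


/-- The Altes chirplet has infinite Lipschitz regularity: for every
α > 0, the frequency-weighted magnitude integral is finite and equals
ω₀·√(π/κ)·exp(1/(4κ))·(1 + ω₀^α·exp((α² + 2α)/(4κ))). -/
theorem altes_infinite_regularity (κ ω₀ lam : ℝ) (hκ : 0 < κ) (hω₀ : 0 < ω₀)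
    (hlam : 0 < lam) (hlam1 : lam ≠ 1) :
    ∀ α : ℝ, 0 < α →
      IntegrableOn (fun ω : ℝ => ‖altes κ ω₀ lam ω‖ * (1 + ω ^ α))
        (Set.Ioi (0 : ℝ)) ∧
      (∫ ω in Set.Ioi (0 : ℝ), ‖altes κ ω₀ lam ω‖ * (1 + ω ^ α)) =
        ω₀ * Real.sqrt (Real.pi / κ) * Real.exp (1 / (4 * κ)) *
          (1 + ω₀ ^ α * Real.exp ((α ^ 2 + 2 * α) / (4 * κ))) := by
  intro α hα
  have hκ' : κ ≠ 0 := ne_of_gt hκ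
  set L := Real.log ω₀ with hL
  set g : ℝ → ℝ := fun ω => rexp (-(κ * (Real.log ω - L) ^ 2)) * (1 + ω ^ α) with hg
  have hnorm : Set.EqOn (fun ω : ℝ => ‖altes κ ω₀ lam ω‖ * (1 + ω ^ α)) g (Set.Ioi 0) := by
    intro ω hω
    simp only [g]
    rw [altes_norm _ _ _ _ hω, Real.log_div (ne_of_gt hω) (ne_of_gt hω₀)]
  have himg : Real.exp '' Set.univ = Set.Ioi (0 : ℝ) := by
    rw [Set.image_univ, Real.range_exp]
  have hderiv : ∀ x ∈ Set.univ, HasDerivWithinAt Real.exp (Real.exp x) Set.univ x :=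
    fun x _ => (Real.hasDerivAt_exp x).hasDerivWithinAt
  have hinj : Set.InjOn Real.exp Set.univ := Real.exp_injective.injOn
  have hcomp : (fun t : ℝ => |Real.exp t| • g (Real.exp t)) =
      fun t : ℝ => rexp (-κ * t ^ 2 + (2 * κ * L + 1) * t + (-(κ * L ^ 2))) +
        rexp (-κ * t ^ 2 + (2 * κ * L + 1 + α) * t + (-(κ * L ^ 2))) := by
    funext t
    have h1 : (Real.exp t) ^ α = rexp (t * α) := by
      rw [Real.rpow_def_of_pos (Real.exp_pos t), Real.log_exp]
    simp only [g, smul_eq_mul, abs_of_pos (Real.exp_pos t), Real.log_exp, h1]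
    rw [mul_add, mul_one, mul_add, ← Real.exp_add, ← Real.exp_add, ← Real.exp_add]
    congr 2 <;> ring
  have hint1 := gauss_integrable κ (2 * κ * L + 1) (-(κ * L ^ 2)) hκ
  have hint2 := gauss_integrable κ (2 * κ * L + 1 + α) (-(κ * L ^ 2)) hκ
  have hIg : IntegrableOn g (Set.Ioi (0 : ℝ)) := by
    rw [← himg, integrableOn_image_iff_integrableOn_abs_deriv_smul MeasurableSet.univ hderiv hinj,
      integrableOn_univ, hcomp]
    exact hint1.add hint2
  refine ⟨(integrableOn_congr_fun hnorm measurableSet_Ioi).mpr hIg, ?_⟩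
  rw [setIntegral_congr_fun measurableSet_Ioi hnorm, ← himg,
    integral_image_eq_integral_abs_deriv_smul MeasurableSet.univ hderiv hinj, setIntegral_univ]
  rw [show (fun t : ℝ => |Real.exp t| • g (Real.exp t)) = _ from hcomp]
  rw [integral_add hint1 hint2, gauss_integral _ _ _ hκ, gauss_integral _ _ _ hκ]
  have e1 : -(κ * L ^ 2) + (2 * κ * L + 1) ^ 2 / (4 * κ) = L + 1 / (4 * κ) := by
    field_simp; ring
  have e2 : -(κ * L ^ 2) + (2 * κ * L + 1 + α) ^ 2 / (4 * κ) =
      L * α + (L + (1 / (4 * κ) + (α ^ 2 + 2 * α) / (4 * κ))) := by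
    field_simp; ring
  rw [e1, e2, show ω₀ = rexp L from (Real.exp_log hω₀).symm, ← Real.exp_mul]
  simp only [Real.exp_add]
  ring
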